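/- arXiv:2505.06201 — 3 statements merged into one kernel-verified Lean document; each statement's English description precedes it below -/
import Mathlib

section
/- Let a = (a_{i,j}) be an M×N array over 𝔽_q with 2-D FFFT A, and let b be the column λ₁-constacyclic shift of a, i.e. b_{0,j} = λ₁·a_{M−1,j} and b_{i,j} = a_{i−1,j} for 1 ≤ i ≤ M−1 and 0 ≤ j ≤ N−1, where λ₁ = γ^M. If B is the 2-D FFFT of b, then B_{θ,φ} = γ ζ₁^θ A_{θ,φ} for all 0 ≤ θ ≤ M−1 and 0 ≤ φ ≤ N−1. -/
/-- Column λ₁-constacyclic shift property of the 2-D FFFT: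
if `b` is the column λ₁-constacyclic shift of `a` (`b 0 j = λ₁ * a (M-1) j`,
`b i j = a (i-1) j` for `i ≥ 1`), then `B θ φ = γ * ζ₁ ^ θ * A θ φ` for all `θ`, `φ`. -/
theorem stmt7 {F K : Type*} [Field F] [Fintype F] [Field K] [Fintype K] [Algebra F K]
    (p : ℕ) [Fact p.Prime] [CharP F p]
    (M N : ℕ) (hM : 0 < M) (hN : 0 < N) (hMN : Nat.Coprime (M * N) p)
    (lam1 lam2 : F) (h1 : lam1 ≠ 0) (h2 : lam2 ≠ 0)
    (γ β ζ₁ ζ₂ : K) (hγ : γ ^ M = algebraMap F K lam1) (hβ : β ^ N = algebraMap F K lam2)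
    (hζ₁ : orderOf ζ₁ = M) (hζ₂ : orderOf ζ₂ = N)
    (a b : Fin M → Fin N → F) (A B : Fin M → Fin N → K)
    (hA : ∀ (θ : Fin M) (φ : Fin N), A θ φ =
      ∑ i : Fin M, ∑ j : Fin N,
        algebraMap F K (a i j) * (γ * ζ₁ ^ (θ : ℕ)) ^ (i : ℕ) * (β * ζ₂ ^ (φ : ℕ)) ^ (j : ℕ))
    (hB : ∀ (θ : Fin M) (φ : Fin N), B θ φ =
      ∑ i : Fin M, ∑ j : Fin N,
        algebraMap F K (b i j) * (γ * ζ₁ ^ (θ : ℕ)) ^ (i : ℕ) * (β * ζ₂ ^ (φ : ℕ)) ^ (j : ℕ))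
    (hb0 : ∀ j : Fin N, b ⟨0, hM⟩ j = lam1 * a ⟨M - 1, Nat.sub_lt hM one_pos⟩ j)
    (hbi : ∀ (i : Fin M) (j : Fin N), (i : ℕ) ≠ 0 →
      b i j = a ⟨(i : ℕ) - 1, lt_of_le_of_lt (Nat.sub_le _ _) i.isLt⟩ j) :
    ∀ (θ : Fin M) (φ : Fin N), B θ φ = γ * ζ₁ ^ (θ : ℕ) * A θ φ := by
  intro θ φ
  obtain ⟨m, rfl⟩ : ∃ m, M = m + 1 := ⟨M - 1, (Nat.succ_pred_eq_of_pos hM).symm⟩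
  set w := γ * ζ₁ ^ (θ : ℕ) with hw
  have hz : ζ₁ ^ (m + 1) = 1 := by rw [← hζ₁]; exact pow_orderOf_eq_one ζ₁
  have hwM : w ^ (m + 1) = algebraMap F K lam1 := by
    calc w ^ (m+1) = γ ^ (m+1) * (ζ₁ ^ (m+1)) ^ (θ : ℕ) := by
          rw [hw, mul_pow, ← pow_mul, ← pow_mul, Nat.mul_comm]
      _ = algebraMap F K lam1 := by rw [hz, one_pow, mul_one, hγ]
  rw [hB, hA, Finset.sum_comm, Finset.sum_comm (γ := Fin (m+1)), Finset.mul_sum]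
  refine Finset.sum_congr rfl fun j _ => ?_
  rw [Finset.mul_sum, Fin.sum_univ_succ, Fin.sum_univ_castSucc]
  have e0 : (0 : Fin (m+1)) = ⟨0, hM⟩ := rfl
  have elast : (⟨m + 1 - 1, Nat.sub_lt hM one_pos⟩ : Fin (m+1)) = Fin.last m := rfl
  rw [e0, hb0 j, elast]
  have hstep : ∀ i : Fin m,
      algebraMap F K (b i.succ j) * w ^ ((i.succ : Fin (m+1)) : ℕ) * (β * ζ₂ ^ (φ : ℕ)) ^ (j : ℕ)
        = w * (algebraMap F K (a i.castSucc j) * w ^ ((i.castSucc : Fin (m+1)) : ℕ)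
            * (β * ζ₂ ^ (φ : ℕ)) ^ (j : ℕ)) := by
    intro i
    have : b i.succ j = a i.castSucc j := by
      rw [hbi i.succ j (by simp)]
      rfl
    rw [this, Fin.val_succ, Fin.coe_castSucc, pow_succ]
    ring
  rw [Finset.sum_congr rfl fun i _ => hstep i]
  rw [map_mul, ← hwM]
  simp only [← hw, Fin.val_last, pow_succ]
  norm_num
  ring
end

section
/- Let a, b, c be M×N arrays over 𝔽_q with 2-D FFFTs A, B, C respectively. Then c_{i,j} = a_{i,j}·b_{i,j} for all (i,j) if and only if for all (θ,φ) with 0 ≤ θ ≤ M−1 and 0 ≤ φ ≤ N−1, C_{θ,φ} = ((M·1_{𝔽_{q^t}})·(N·1_{𝔽_{q^t}}))^{-1} · Σ_{θ'=0}^{M−1} Σ_{φ'=0}^{N−1} 𝒜_{(θ−θ') mod M, (φ−φ') mod N} · B_{θ',φ'}, where 𝒜_{u,v} = Σ_{i=0}^{M−1} Σ_{j=0}^{N−1} a_{i,j} ζ₁^{iu} ζ₂^{jv} is the 2-D cyclic discrete Fourier transform of a (the 2-D FFFT with γ = β = 1). -/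
section aux
variable {K : Type*} [Field K]

lemma myorth {M : ℕ} (hM : 0 < M) {ζ : K} (hζ : orderOf ζ = M) (d : ℕ) :
    ∑ x : Fin M, ζ ^ ((x : ℕ) * d) = if M ∣ d then (M : K) else 0 := by
  have hζM : ζ ^ M = 1 := by rw [← hζ]; exact pow_orderOf_eq_one ζ
  have h1 : ∑ x : Fin M, ζ ^ ((x : ℕ) * d) = ∑ i ∈ Finset.range M, (ζ ^ d) ^ i := by
    rw [← Fin.sum_univ_eq_sum_range (fun i => (ζ ^ d) ^ i) M]
    exact Finset.sum_congr rfl fun x _ => by rw [← pow_mul, mul_comm]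
  rw [h1]
  split_ifs with h
  · obtain ⟨e, rfl⟩ := h
    have : ζ ^ (M * e) = 1 := by rw [pow_mul, hζM, one_pow]
    simp [this]
  · have hne : ζ ^ d ≠ 1 := fun hh => h (hζ ▸ orderOf_dvd_of_pow_eq_one hh)
    rw [geom_sum_eq hne]
    rw [← pow_mul, mul_comm d M, pow_mul, hζM, one_pow, sub_self, zero_div]

lemma mydvd {M : ℕ} (i k : Fin M) : M ∣ ((k : ℕ) + (M - (i : ℕ))) ↔ i = k := by
  have hi := i.isLt
  have hk := k.isLt
  constructor
  · rintro ⟨e, he⟩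
    have h1 : M * e < M * 2 := by omega
    have h2 : 0 < M * e := by omega
    have he2 : e < 2 := lt_of_mul_lt_mul_left h1 (Nat.zero_le M)
    have he1 : e ≠ 0 := by rintro rfl; omega
    have : e = 1 := by omega
    subst this
    exact Fin.ext (by omega)
  · rintro rfl
    exact ⟨1, by omega⟩

lemma mycong {M : ℕ} {ζ : K} (hζ : orderOf ζ = M) {a b : ℕ} (h : (a : ZMod M) = (b : ZMod M)) :
    ζ ^ a = ζ ^ b := by
  have := (ZMod.natCast_eq_natCast_iff a b M).mp h
  rw [← pow_mod_orderOf ζ a, ← pow_mod_orderOf ζ b, hζ, this]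

lemma myinner1 {M : ℕ} (hM : 0 < M) {ζ : K} (hζ : orderOf ζ = M) (θ i k : Fin M) :
    ∑ θ' : Fin M, ζ ^ ((i : ℕ) * ((θ - θ' : Fin M) : ℕ)) * ζ ^ ((θ' : ℕ) * (k : ℕ))
      = if i = k then ζ ^ ((i : ℕ) * (θ : ℕ)) * (M : K) else 0 := by
  have key : ∀ θ' : Fin M, ζ ^ ((i : ℕ) * ((θ - θ' : Fin M) : ℕ)) * ζ ^ ((θ' : ℕ) * (k : ℕ))
      = ζ ^ ((i : ℕ) * (θ : ℕ)) * ζ ^ ((θ' : ℕ) * ((k : ℕ) + (M - (i : ℕ)))) := by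
    intro θ'
    rw [← pow_add, ← pow_add]
    apply mycong hζ
    have hv : ((θ - θ' : Fin M) : ℕ) = ((θ : ℕ) + (M - (θ' : ℕ))) % M := by
      rw [Fin.sub_def]; simp [Nat.add_comm]
    rw [hv]
    have h1 : (θ' : ℕ) ≤ M := le_of_lt θ'.isLt
    have h2 : (i : ℕ) ≤ M := le_of_lt i.isLt
    push_cast [Nat.cast_sub h1, Nat.cast_sub h2, ZMod.natCast_mod]
    rw [ZMod.natCast_self]
    ring
  simp_rw [key]
  rw [← Finset.mul_sum, myorth hM hζ]
  simp only [mydvd, mul_ite, mul_zero]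

lemma myinner2 {M : ℕ} (hM : 0 < M) {ζ : K} (hζ : orderOf ζ = M) (i k : Fin M) :
    ∑ θ : Fin M, ζ ^ ((θ : ℕ) * (k : ℕ)) * ζ ^ ((θ : ℕ) * (M - (i : ℕ)))
      = if i = k then (M : K) else 0 := by
  have key : ∀ θ : Fin M, ζ ^ ((θ : ℕ) * (k : ℕ)) * ζ ^ ((θ : ℕ) * (M - (i : ℕ)))
      = ζ ^ ((θ : ℕ) * ((k : ℕ) + (M - (i : ℕ)))) := by
    intro θ; rw [← pow_add, ← Nat.mul_add]
  simp_rw [key]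
  rw [myorth hM hζ]
  simp only [mydvd]

lemma conv_core {M N : ℕ} (hM : 0 < M) (hN : 0 < N) {ζ₁ ζ₂ γ β : K}
    (hζ₁ : orderOf ζ₁ = M) (hζ₂ : orderOf ζ₂ = N)
    (f g : Fin M → Fin N → K) (θ : Fin M) (φ : Fin N) :
    ∑ θ' : Fin M, ∑ φ' : Fin N,
      (∑ i : Fin M, ∑ j : Fin N,
        f i j * ζ₁ ^ ((i : ℕ) * ((θ - θ' : Fin M) : ℕ)) * ζ₂ ^ ((j : ℕ) * ((φ - φ' : Fin N) : ℕ)))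
      * (∑ i : Fin M, ∑ j : Fin N,
        g i j * (γ * ζ₁ ^ (θ' : ℕ)) ^ (i : ℕ) * (β * ζ₂ ^ (φ' : ℕ)) ^ (j : ℕ))
    = (M : K) * (N : K) * ∑ i : Fin M, ∑ j : Fin N,
        f i j * g i j * (γ * ζ₁ ^ (θ : ℕ)) ^ (i : ℕ) * (β * ζ₂ ^ (φ : ℕ)) ^ (j : ℕ) := by
  simp only [← Finset.sum_product', Finset.univ_product_univ]
  calc
    ∑ r : Fin M × Fin N,
        (∑ p : Fin M × Fin N, f p.1 p.2 * ζ₁ ^ ((p.1 : ℕ) * ((θ - r.1 : Fin M) : ℕ)) *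
          ζ₂ ^ ((p.2 : ℕ) * ((φ - r.2 : Fin N) : ℕ)))
        * (∑ q : Fin M × Fin N, g q.1 q.2 * (γ * ζ₁ ^ (r.1 : ℕ)) ^ (q.1 : ℕ) *
          (β * ζ₂ ^ (r.2 : ℕ)) ^ (q.2 : ℕ))
      = ∑ r : Fin M × Fin N, ∑ p : Fin M × Fin N, ∑ q : Fin M × Fin N,
          (f p.1 p.2 * ζ₁ ^ ((p.1 : ℕ) * ((θ - r.1 : Fin M) : ℕ)) *
            ζ₂ ^ ((p.2 : ℕ) * ((φ - r.2 : Fin N) : ℕ)))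
          * (g q.1 q.2 * (γ * ζ₁ ^ (r.1 : ℕ)) ^ (q.1 : ℕ) *
            (β * ζ₂ ^ (r.2 : ℕ)) ^ (q.2 : ℕ)) := by
        exact Finset.sum_congr rfl fun r _ => Finset.sum_mul_sum _ _ _ _
    _ = ∑ p : Fin M × Fin N, ∑ q : Fin M × Fin N, ∑ r : Fin M × Fin N,
          (f p.1 p.2 * ζ₁ ^ ((p.1 : ℕ) * ((θ - r.1 : Fin M) : ℕ)) *
            ζ₂ ^ ((p.2 : ℕ) * ((φ - r.2 : Fin N) : ℕ)))
          * (g q.1 q.2 * (γ * ζ₁ ^ (r.1 : ℕ)) ^ (q.1 : ℕ) *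
            (β * ζ₂ ^ (r.2 : ℕ)) ^ (q.2 : ℕ)) := by
        rw [Finset.sum_comm]
        exact Finset.sum_congr rfl fun p _ => Finset.sum_comm
    _ = ∑ p : Fin M × Fin N, ∑ q : Fin M × Fin N,
          (f p.1 p.2 * g q.1 q.2 * γ ^ (q.1 : ℕ) * β ^ (q.2 : ℕ))
          * (∑ r1 : Fin M, ζ₁ ^ ((p.1 : ℕ) * ((θ - r1 : Fin M) : ℕ)) * ζ₁ ^ ((r1 : ℕ) * (q.1 : ℕ)))
          * (∑ r2 : Fin N, ζ₂ ^ ((p.2 : ℕ) * ((φ - r2 : Fin N) : ℕ)) * ζ₂ ^ ((r2 : ℕ) * (q.2 : ℕ))) := by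
        refine Finset.sum_congr rfl fun p _ => Finset.sum_congr rfl fun q _ => ?_
        rw [Fintype.sum_prod_type]
        simp only [Finset.mul_sum, Finset.sum_mul]
        rw [Finset.sum_comm]
        refine Finset.sum_congr rfl fun r1 _ => Finset.sum_congr rfl fun r2 _ => ?_
        ring
    _ = ∑ p : Fin M × Fin N, ∑ q : Fin M × Fin N,
          (f p.1 p.2 * g q.1 q.2 * γ ^ (q.1 : ℕ) * β ^ (q.2 : ℕ))
          * (if p.1 = q.1 then ζ₁ ^ ((p.1 : ℕ) * (θ : ℕ)) * (M : K) else 0)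
          * (if p.2 = q.2 then ζ₂ ^ ((p.2 : ℕ) * (φ : ℕ)) * (N : K) else 0) := by
        simp_rw [myinner1 hM hζ₁, myinner1 hN hζ₂]
    _ = ∑ p : Fin M × Fin N,
          (f p.1 p.2 * g p.1 p.2 * γ ^ (p.1 : ℕ) * β ^ (p.2 : ℕ))
          * (ζ₁ ^ ((p.1 : ℕ) * (θ : ℕ)) * (M : K))
          * (ζ₂ ^ ((p.2 : ℕ) * (φ : ℕ)) * (N : K)) := by
        refine Finset.sum_congr rfl fun p _ => ?_
        have h1 : ∀ q : Fin M × Fin N,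
            (f p.1 p.2 * g q.1 q.2 * γ ^ (q.1 : ℕ) * β ^ (q.2 : ℕ))
            * (if p.1 = q.1 then ζ₁ ^ ((p.1 : ℕ) * (θ : ℕ)) * (M : K) else 0)
            * (if p.2 = q.2 then ζ₂ ^ ((p.2 : ℕ) * (φ : ℕ)) * (N : K) else 0)
            = if q = p then (f p.1 p.2 * g p.1 p.2 * γ ^ (p.1 : ℕ) * β ^ (p.2 : ℕ))
                * (ζ₁ ^ ((p.1 : ℕ) * (θ : ℕ)) * (M : K))
                * (ζ₂ ^ ((p.2 : ℕ) * (φ : ℕ)) * (N : K)) else 0 := by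
          rintro ⟨q1, q2⟩
          by_cases e1 : p.1 = q1 <;> by_cases e2 : p.2 = q2 <;>
            simp [Prod.ext_iff, e1, e2, eq_comm]
        simp_rw [h1]
        rw [Finset.sum_ite_eq' Finset.univ p, if_pos (Finset.mem_univ p)]
    _ = (M : K) * (N : K) * ∑ p : Fin M × Fin N,
          f p.1 p.2 * g p.1 p.2 * (γ * ζ₁ ^ (θ : ℕ)) ^ (p.1 : ℕ) * (β * ζ₂ ^ (φ : ℕ)) ^ (p.2 : ℕ) := by
        rw [Finset.mul_sum]
        refine Finset.sum_congr rfl fun p _ => ?_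
        ring


lemma myinv {M N : ℕ} (hM : 0 < M) (hN : 0 < N) {ζ₁ ζ₂ γ β : K}
    (hζ₁ : orderOf ζ₁ = M) (hζ₂ : orderOf ζ₂ = N)
    (hγ : γ ≠ 0) (hβ : β ≠ 0) (hMK : (M : K) ≠ 0) (hNK : (N : K) ≠ 0)
    (f : Fin M → Fin N → K)
    (h : ∀ (θ : Fin M) (φ : Fin N), ∑ i : Fin M, ∑ j : Fin N,
      f i j * (γ * ζ₁ ^ (θ : ℕ)) ^ (i : ℕ) * (β * ζ₂ ^ (φ : ℕ)) ^ (j : ℕ) = 0)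
    (i0 : Fin M) (j0 : Fin N) : f i0 j0 = 0 := by
  have T0 : ∑ θ : Fin M, ∑ φ : Fin N,
      (∑ i : Fin M, ∑ j : Fin N,
        f i j * (γ * ζ₁ ^ (θ : ℕ)) ^ (i : ℕ) * (β * ζ₂ ^ (φ : ℕ)) ^ (j : ℕ))
      * ζ₁ ^ ((θ : ℕ) * (M - (i0 : ℕ))) * ζ₂ ^ ((φ : ℕ) * (N - (j0 : ℕ))) = 0 := by
    simp [h]
  have T1 : ∑ θ : Fin M, ∑ φ : Fin N,
      (∑ i : Fin M, ∑ j : Fin N,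
        f i j * (γ * ζ₁ ^ (θ : ℕ)) ^ (i : ℕ) * (β * ζ₂ ^ (φ : ℕ)) ^ (j : ℕ))
      * ζ₁ ^ ((θ : ℕ) * (M - (i0 : ℕ))) * ζ₂ ^ ((φ : ℕ) * (N - (j0 : ℕ)))
      = (M : K) * (N : K) * γ ^ (i0 : ℕ) * β ^ (j0 : ℕ) * f i0 j0 := by
    simp only [← Finset.sum_product', Finset.univ_product_univ]
    calc
      ∑ r : Fin M × Fin N,
          (∑ p : Fin M × Fin N,
            f p.1 p.2 * (γ * ζ₁ ^ (r.1 : ℕ)) ^ (p.1 : ℕ) * (β * ζ₂ ^ (r.2 : ℕ)) ^ (p.2 : ℕ))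
          * ζ₁ ^ ((r.1 : ℕ) * (M - (i0 : ℕ))) * ζ₂ ^ ((r.2 : ℕ) * (N - (j0 : ℕ)))
        = ∑ r : Fin M × Fin N, ∑ p : Fin M × Fin N,
            f p.1 p.2 * (γ * ζ₁ ^ (r.1 : ℕ)) ^ (p.1 : ℕ) * (β * ζ₂ ^ (r.2 : ℕ)) ^ (p.2 : ℕ)
            * ζ₁ ^ ((r.1 : ℕ) * (M - (i0 : ℕ))) * ζ₂ ^ ((r.2 : ℕ) * (N - (j0 : ℕ))) := by
          refine Finset.sum_congr rfl fun r _ => ?_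
          rw [Finset.sum_mul, Finset.sum_mul]
      _ = ∑ p : Fin M × Fin N, ∑ r : Fin M × Fin N,
            f p.1 p.2 * (γ * ζ₁ ^ (r.1 : ℕ)) ^ (p.1 : ℕ) * (β * ζ₂ ^ (r.2 : ℕ)) ^ (p.2 : ℕ)
            * ζ₁ ^ ((r.1 : ℕ) * (M - (i0 : ℕ))) * ζ₂ ^ ((r.2 : ℕ) * (N - (j0 : ℕ))) := by
          exact Finset.sum_comm
      _ = ∑ p : Fin M × Fin N,
            (f p.1 p.2 * γ ^ (p.1 : ℕ) * β ^ (p.2 : ℕ))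
            * (∑ r1 : Fin M, ζ₁ ^ ((r1 : ℕ) * (p.1 : ℕ)) * ζ₁ ^ ((r1 : ℕ) * (M - (i0 : ℕ))))
            * (∑ r2 : Fin N, ζ₂ ^ ((r2 : ℕ) * (p.2 : ℕ)) * ζ₂ ^ ((r2 : ℕ) * (N - (j0 : ℕ)))) := by
          refine Finset.sum_congr rfl fun p _ => ?_
          rw [Fintype.sum_prod_type]
          simp only [Finset.mul_sum, Finset.sum_mul]
          rw [Finset.sum_comm]
          refine Finset.sum_congr rfl fun r1 _ => Finset.sum_congr rfl fun r2 _ => ?_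
          ring
      _ = ∑ p : Fin M × Fin N,
            (f p.1 p.2 * γ ^ (p.1 : ℕ) * β ^ (p.2 : ℕ))
            * (if i0 = p.1 then (M : K) else 0) * (if j0 = p.2 then (N : K) else 0) := by
          simp_rw [myinner2 hM hζ₁, myinner2 hN hζ₂]
      _ = (M : K) * (N : K) * γ ^ (i0 : ℕ) * β ^ (j0 : ℕ) * f i0 j0 := by
          have h1 : ∀ p : Fin M × Fin N,
              (f p.1 p.2 * γ ^ (p.1 : ℕ) * β ^ (p.2 : ℕ))
              * (if i0 = p.1 then (M : K) else 0) * (if j0 = p.2 then (N : K) else 0)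
              = if p = (i0, j0) then
                  (M : K) * (N : K) * γ ^ (i0 : ℕ) * β ^ (j0 : ℕ) * f i0 j0 else 0 := by
            rintro ⟨p1, p2⟩
            by_cases e1 : i0 = p1 <;> by_cases e2 : j0 = p2 <;>
              simp [Prod.ext_iff, e1, e2, eq_comm]
            subst e1; subst e2; ring
          simp_rw [h1]
          rw [Finset.sum_ite_eq' Finset.univ (i0, j0), if_pos (Finset.mem_univ _)]
  rw [T0] at T1
  have hne : (M : K) * (N : K) * γ ^ (i0 : ℕ) * β ^ (j0 : ℕ) ≠ 0 := by
    apply mul_ne_zero; apply mul_ne_zero; apply mul_ne_zero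
    all_goals first | exact hMK | exact hNK | exact pow_ne_zero _ hγ | exact pow_ne_zero _ hβ
  rcases mul_eq_zero.mp T1.symm with h' | h'
  · exact absurd h' hne
  · exact h'

end aux



/-- 2-D convolution property (multiplication to convolution):
`c i j = a i j * b i j` for all `(i,j)` iff for all `(θ,φ)`,
`C θ φ = (M * N)⁻¹ * ∑ θ' φ', 𝒜 (θ - θ') (φ - φ') * B θ' φ'`, where
`𝒜 u v = ∑ i j, a i j * ζ₁^(i*u) * ζ₂^(j*v)` is the 2-D cyclic DFT of `a` (the 2-D FFFT
with `γ = β = 1`), and the index differences are taken mod `M`, `N` (`Fin` subtraction). -/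
theorem stmt9 {F K : Type*} [Field F] [Fintype F] [Field K] [Fintype K] [Algebra F K]
    (p : ℕ) [Fact p.Prime] [CharP F p]
    (M N : ℕ) (hM : 0 < M) (hN : 0 < N) (hMN : Nat.Coprime (M * N) p)
    (lam1 lam2 : F) (h1 : lam1 ≠ 0) (h2 : lam2 ≠ 0)
    (γ β ζ₁ ζ₂ : K) (hγ : γ ^ M = algebraMap F K lam1) (hβ : β ^ N = algebraMap F K lam2)
    (hζ₁ : orderOf ζ₁ = M) (hζ₂ : orderOf ζ₂ = N)
    (a b c : Fin M → Fin N → F) (A B C 𝒜 : Fin M → Fin N → K)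
    (hA : ∀ (θ : Fin M) (φ : Fin N), A θ φ =
      ∑ i : Fin M, ∑ j : Fin N,
        algebraMap F K (a i j) * (γ * ζ₁ ^ (θ : ℕ)) ^ (i : ℕ) * (β * ζ₂ ^ (φ : ℕ)) ^ (j : ℕ))
    (hB : ∀ (θ : Fin M) (φ : Fin N), B θ φ =
      ∑ i : Fin M, ∑ j : Fin N,
        algebraMap F K (b i j) * (γ * ζ₁ ^ (θ : ℕ)) ^ (i : ℕ) * (β * ζ₂ ^ (φ : ℕ)) ^ (j : ℕ))
    (hC : ∀ (θ : Fin M) (φ : Fin N), C θ φ =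
      ∑ i : Fin M, ∑ j : Fin N,
        algebraMap F K (c i j) * (γ * ζ₁ ^ (θ : ℕ)) ^ (i : ℕ) * (β * ζ₂ ^ (φ : ℕ)) ^ (j : ℕ))
    (h𝒜 : ∀ (u : Fin M) (v : Fin N), 𝒜 u v =
      ∑ i : Fin M, ∑ j : Fin N,
        algebraMap F K (a i j) * ζ₁ ^ ((i : ℕ) * (u : ℕ)) * ζ₂ ^ ((j : ℕ) * (v : ℕ))) :
    (∀ (i : Fin M) (j : Fin N), c i j = a i j * b i j) ↔
      ∀ (θ : Fin M) (φ : Fin N), C θ φ =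
        ((M : K) * (N : K))⁻¹ *
          ∑ θ' : Fin M, ∑ φ' : Fin N, 𝒜 (θ - θ') (φ - φ') * B θ' φ' := by
  have hp : p.Prime := Fact.out
  have hpM : ¬ p ∣ M := by
    intro hd
    have : p ∣ Nat.gcd (M * N) p := Nat.dvd_gcd (hd.mul_right N) dvd_rfl
    rw [hMN] at this
    exact hp.one_lt.ne' (Nat.dvd_one.mp this)
  have hpN : ¬ p ∣ N := by
    intro hd
    have : p ∣ Nat.gcd (M * N) p := Nat.dvd_gcd (hd.mul_left M) dvd_rfl
    rw [hMN] at this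
    exact hp.one_lt.ne' (Nat.dvd_one.mp this)
  haveI : CharP K p := charP_of_injective_algebraMap (algebraMap F K).injective p
  have hMK : (M : K) ≠ 0 := fun h0 => hpM ((CharP.cast_eq_zero_iff K p M).mp h0)
  have hNK : (N : K) ≠ 0 := fun h0 => hpN ((CharP.cast_eq_zero_iff K p N).mp h0)
  have hMN0 : (M : K) * (N : K) ≠ 0 := mul_ne_zero hMK hNK
  have hγ0 : γ ≠ 0 := by
    intro h0
    apply h1
    apply (algebraMap F K).injective
    rw [← hγ, h0, zero_pow hM.ne', map_zero]
  have hβ0 : β ≠ 0 := by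
    intro h0
    apply h2
    apply (algebraMap F K).injective
    rw [← hβ, h0, zero_pow hN.ne', map_zero]
  have hcore : ∀ (θ : Fin M) (φ : Fin N),
      ((M : K) * (N : K))⁻¹ *
        ∑ θ' : Fin M, ∑ φ' : Fin N, 𝒜 (θ - θ') (φ - φ') * B θ' φ'
      = ∑ i : Fin M, ∑ j : Fin N,
          (algebraMap F K (a i j) * algebraMap F K (b i j)) *
            (γ * ζ₁ ^ (θ : ℕ)) ^ (i : ℕ) * (β * ζ₂ ^ (φ : ℕ)) ^ (j : ℕ) := by
    intro θ φ
    simp only [h𝒜, hB]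
    rw [conv_core hM hN hζ₁ hζ₂ (fun i j => algebraMap F K (a i j))
      (fun i j => algebraMap F K (b i j)) θ φ]
    rw [inv_mul_cancel_left₀ hMN0]
  constructor
  · intro hc θ φ
    rw [hC, hcore θ φ]
    exact Finset.sum_congr rfl fun i _ => Finset.sum_congr rfl fun j _ => by
      rw [hc i j, map_mul]
  · intro hcond i j
    have hz : ∀ (θ : Fin M) (φ : Fin N), ∑ i : Fin M, ∑ j : Fin N,
        (algebraMap F K (c i j) - algebraMap F K (a i j) * algebraMap F K (b i j)) *
          (γ * ζ₁ ^ (θ : ℕ)) ^ (i : ℕ) * (β * ζ₂ ^ (φ : ℕ)) ^ (j : ℕ) = 0 := by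
      intro θ φ
      have h3 := hcond θ φ
      rw [hC, hcore θ φ] at h3
      simp only [sub_mul, Finset.sum_sub_distrib]
      rw [← h3]
      exact sub_self _
    have h0 := myinv hM hN hζ₁ hζ₂ hγ0 hβ0 hMK hNK
      (fun i j => algebraMap F K (c i j) - algebraMap F K (a i j) * algebraMap F K (b i j))
      hz i j
    apply (algebraMap F K).injective
    rw [map_mul]
    exact sub_eq_zero.mp h0
end

section
/- Let C be a 2-D (λ₁,λ₂)-constacyclic code of area M×N over 𝔽_q with common zero set V_c, where gcd(M,p)=1. Suppose b is an element of an extension field of 𝔽_q with b^N = λ₂ such that (a,b) ∈ V_c for every element a of that extension field with a^M = λ₁. Then for every codeword c ∈ C and every row index i with 0 ≤ i ≤ M−1, the row polynomial c_i(y) = Σ_{j=0}^{N−1} c_{i,j} y^j satisfies c_i(b) = 0. Consequently, if a received array r satisfies r = c + e with c ∈ C, then the row syndromes satisfy r_i(b) = e_i(b) for every i, where r_i and e_i are the i-th row polynomials of r and e. -/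
/-- Evaluation of the bivariate polynomial `∑ i j, c i j * x^i * y^j` associated with an
`M × N` array `c` over `F` at a point `(ab.1, ab.2)` of an extension field `K`. -/
def arrayEval {F K : Type*} [Field F] [Field K] [Algebra F K] {M N : ℕ}
    (c : Fin M → Fin N → F) (ab : K × K) : K :=
  ∑ i : Fin M, ∑ j : Fin N,
    algebraMap F K (c i j) * ab.1 ^ (i : ℕ) * ab.2 ^ (j : ℕ)

lemma rowVanish {F K : Type*} [Field F] [Field K] [Algebra F K]
    {M : ℕ} [NeZero M] (lam1 : F) (h1 : lam1 ≠ 0)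
    (γ ζ₁ : K) (hγ : γ ^ M = algebraMap F K lam1) (hζ₁ : orderOf ζ₁ = M)
    (row : Fin M → K)
    (hall : ∀ a : K, a ^ M = algebraMap F K lam1 → ∑ i : Fin M, row i * a ^ (i:ℕ) = 0) :
    ∀ i, row i = 0 := by
  have hγ0 : γ ≠ 0 := by
    intro h; apply h1
    have : (0:K) ^ M = algebraMap F K lam1 := h ▸ hγ
    rw [zero_pow (NeZero.ne M)] at this
    exact (map_eq_zero _).mp this.symm
  set P : Polynomial K := ∑ i : Fin M, Polynomial.C (row i) * Polynomial.X ^ (i:ℕ) with hP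
  have hdeg : P.natDegree < M := by
    refine lt_of_le_of_lt (Polynomial.natDegree_sum_le _ _) ?_
    rw [Finset.fold_max_lt]
    constructor
    · exact Nat.pos_of_ne_zero (NeZero.ne M)
    · intro i _
      exact lt_of_le_of_lt (Polynomial.natDegree_C_mul_X_pow_le _ _) i.isLt
  have hf : Function.Injective (fun k : Fin M => γ * ζ₁ ^ (k:ℕ)) := by
    intro i j hij
    simp only [mul_right_inj' hγ0] at hij
    exact Fin.ext (pow_injOn_Iio_orderOf (by simp [hζ₁, i.isLt]) (by simp [hζ₁, j.isLt]) hij)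
  have heval : ∀ k : Fin M, P.eval (γ * ζ₁ ^ (k:ℕ)) = 0 := by
    intro k
    have hpow : (γ * ζ₁ ^ (k:ℕ)) ^ M = algebraMap F K lam1 := by
      have hone : ζ₁ ^ M = 1 := hζ₁ ▸ pow_orderOf_eq_one ζ₁
      rw [mul_pow, ← pow_mul, mul_comm (k:ℕ) M, pow_mul, hone, one_pow, mul_one, hγ]
    have := hall _ hpow
    simpa [hP, Polynomial.eval_finset_sum] using this
  have hP0 : P = 0 := P.eq_zero_of_natDegree_lt_card_of_eval_eq_zero hf heval (by simpa using hdeg)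
  intro i
  have := congrArg (fun q => Polynomial.coeff q (i:ℕ)) hP0
  simp only [hP, Polynomial.finset_sum_coeff, Polynomial.coeff_C_mul, Polynomial.coeff_X_pow,
    Polynomial.coeff_zero] at this
  rw [Finset.sum_eq_single i] at this
  · simpa using this
  · intro j _ hj
    simp [Fin.val_eq_val, Ne.symm hj]
  · simp

/-- If `b` satisfies `b^N = λ₂` and `(a, b) ∈ V_c` for every `a` with
`a^M = λ₁`, then every row polynomial of every codeword vanishes at `b`; consequently,
if `r = c + e` with `c ∈ Code`, then the row syndromes satisfy `r_i(b) = e_i(b)`. -/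
theorem stmt18 {F K : Type*} [Field F] [Fintype F] [Field K] [Fintype K] [Algebra F K]
    (p : ℕ) [Fact p.Prime] [CharP F p]
    (M N : ℕ) [NeZero M] [NeZero N] (hMp : Nat.Coprime M p)
    (lam1 lam2 : F) (h1 : lam1 ≠ 0) (h2 : lam2 ≠ 0)
    (Code : Submodule F (Fin M → Fin N → F))
    (hcol : ∀ c ∈ Code,
      (fun i j => (if i = 0 then lam1 else 1) * c (i - 1) j) ∈ Code)
    (hrow : ∀ c ∈ Code,
      (fun i j => (if j = 0 then lam2 else 1) * c i (j - 1)) ∈ Code)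
    (γ ζ₁ : K) (hγ : γ ^ M = algebraMap F K lam1) (hζ₁ : orderOf ζ₁ = M)
    (Vc : Set (K × K))
    (hVc : ∀ ab : K × K, ab ∈ Vc ↔
      ab.1 ^ M = algebraMap F K lam1 ∧ ab.2 ^ N = algebraMap F K lam2 ∧
        ∀ c ∈ Code, arrayEval c ab = 0)
    (b : K) (hbN : b ^ N = algebraMap F K lam2)
    (hball : ∀ a : K, a ^ M = algebraMap F K lam1 → ((a, b) : K × K) ∈ Vc) :
    (∀ c ∈ Code, ∀ i : Fin M,
      ∑ j : Fin N, algebraMap F K (c i j) * b ^ (j : ℕ) = 0) ∧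
    (∀ r e : Fin M → Fin N → F, ∀ c ∈ Code, r = c + e →
      ∀ i : Fin M,
        ∑ j : Fin N, algebraMap F K (r i j) * b ^ (j : ℕ) =
          ∑ j : Fin N, algebraMap F K (e i j) * b ^ (j : ℕ)) := by
  have key : ∀ c ∈ Code, ∀ i : Fin M,
      ∑ j : Fin N, algebraMap F K (c i j) * b ^ (j : ℕ) = 0 := by
    intro c hc
    apply rowVanish lam1 h1 γ ζ₁ hγ hζ₁
    intro a ha
    have hmem := (hVc (a, b)).mp (hball a ha)
    have h0 : arrayEval c (a, b) = 0 := hmem.2.2 c hc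
    rw [← h0]
    unfold arrayEval
    simp only [Finset.sum_mul]
    congr 1; ext i; congr 1; ext j; ring
  refine ⟨key, ?_⟩
  intro r e c hc hre i
  subst hre
  simp only [Pi.add_apply, map_add, add_mul, Finset.sum_add_distrib, key c hc i, zero_add]
end
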